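/- Let u : [0,b) → [0,∞) be continuous, v(t) = ∫₀^t u(s) ds, and suppose v satisfies v'(t) - 2N·v(t) ≤ 2(α + A·ℓ(t)² ), where ℓ(t) = ℓ₀ + ∫₀^t √(u(s)) ds for constants N, A, α, ℓ₀ ≥ 0 and 0 < b < ∞. Then u is bounded on [0,b). -/

import Mathlib

open Set intervalIntegral

private lemma prim_hasDerivWithinAt {f : ℝ → ℝ} {b : ℝ} (hf : ContinuousOn f (Set.Ico 0 b))
    {x : ℝ} (hx : x ∈ Set.Ico (0:ℝ) b) :
    HasDerivWithinAt (fun y => ∫ s in (0:ℝ)..y, f s) (f x) (Set.Ici x) x := by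
  have hmem : Set.Ico (0:ℝ) b ∈ nhdsWithin x (Set.Ici x) :=
    mem_nhdsWithin.2 ⟨Set.Iio b, isOpen_Iio, hx.2,
      fun y hy => ⟨hx.1.trans hy.2, hy.1⟩⟩
  have hsub : Set.Icc (0:ℝ) x ⊆ Set.Ico 0 b :=
    fun y hy => ⟨hy.1, lt_of_le_of_lt hy.2 hx.2⟩
  have hint : IntervalIntegrable f MeasureTheory.volume 0 x := by
    apply ContinuousOn.intervalIntegrable
    rw [Set.uIcc_of_le hx.1]
    exact hf.mono hsub
  have hmem' : Set.Ico (0:ℝ) b ∈ nhdsWithin x (Set.Ioi x) :=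
    nhdsWithin_mono x Set.Ioi_subset_Ici_self hmem
  have hmeas : StronglyMeasurableAtFilter f (nhdsWithin x (Set.Ioi x)) :=
    ⟨Set.Ico 0 b, hmem', hf.aestronglyMeasurable measurableSet_Ico⟩
  exact intervalIntegral.integral_hasDerivWithinAt_right hint hmeas
    ((hf x hx).mono_of_mem_nhdsWithin hmem')

private lemma prim_continuousOn {f : ℝ → ℝ} {b T : ℝ} (hf : ContinuousOn f (Set.Ico 0 b))
    (hT : T ∈ Set.Ico (0:ℝ) b) :
    ContinuousOn (fun y => ∫ s in (0:ℝ)..y, f s) (Set.Icc 0 T) := by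
  have hsub : Set.Icc (0:ℝ) T ⊆ Set.Ico 0 b :=
    fun y hy => ⟨hy.1, lt_of_le_of_lt hy.2 hT.2⟩
  have := intervalIntegral.continuousOn_primitive_interval
    (f := f) (a := (0:ℝ)) (b := T) (μ := MeasureTheory.volume) ?_
  · rwa [Set.uIcc_of_le hT.1] at this
  · rw [Set.uIcc_of_le hT.1]
    exact (hf.mono hsub).integrableOn_Icc

private lemma gronwallBound_mono_x {δ K ε t b : ℝ} (hδ : 0 ≤ δ) (hK : 0 < K) (hε : 0 ≤ ε)
    (htb : t ≤ b) : gronwallBound δ K ε t ≤ gronwallBound δ K ε b := by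
  rw [gronwallBound_of_K_ne_0 hK.ne']
  have h1 : Real.exp (K * t) ≤ Real.exp (K * b) :=
    Real.exp_le_exp.2 (mul_le_mul_of_nonneg_left htb hK.le)
  have h2 : (0:ℝ) ≤ ε / K := div_nonneg hε hK.le
  nlinarith [Real.exp_pos (K * t), Real.exp_pos (K * b)]

/-- Key analytic step of the non-autonomous completeness theorem: if `u ≥ 0` is
continuous on `[0,b)` (`0 < b < ∞`), `v(t) = ∫₀^t u`, `ℓ(t) = ℓ₀ + ∫₀^t √u`, and
`v'(t) - 2N v(t) ≤ 2(α + A ℓ(t)²)` (i.e. `u(t) - 2N ∫₀^t u ≤ 2(α + A ℓ(t)²)`),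
then `u` is bounded on `[0,b)`. -/
theorem nonautonomous_energy_bound (u : ℝ → ℝ) (b N A α ℓ₀ : ℝ)
    (hb : 0 < b) (hN : 0 ≤ N) (hA : 0 ≤ A) (hα : 0 ≤ α) (hℓ₀ : 0 ≤ ℓ₀)
    (hcont : ContinuousOn u (Set.Ico 0 b))
    (hnonneg : ∀ t ∈ Set.Ico (0:ℝ) b, 0 ≤ u t)
    (hineq : ∀ t ∈ Set.Ico (0:ℝ) b,
      u t - 2 * N * (∫ s in (0:ℝ)..t, u s) ≤
        2 * (α + A * (ℓ₀ + ∫ s in (0:ℝ)..t, Real.sqrt (u s)) ^ 2)) :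
    ∃ K : ℝ, ∀ t ∈ Set.Ico (0:ℝ) b, u t ≤ K := by
  have hcont' : ContinuousOn (fun s => Real.sqrt (u s)) (Set.Ico 0 b) :=
    Real.continuous_sqrt.comp_continuousOn hcont
  set V : ℝ → ℝ := fun t => ∫ s in (0:ℝ)..t, u s with hV
  set L : ℝ → ℝ := fun t => ℓ₀ + ∫ s in (0:ℝ)..t, Real.sqrt (u s) with hL
  set h : ℝ → ℝ := fun t => V t + L t ^ 2 with hh
  set K : ℝ := 4 * N + 4 * A + 1 with hK
  have hKpos : 0 < K := by positivity
  set B : ℝ := gronwallBound (ℓ₀ ^ 2) K (4 * α) b with hB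
  -- basic nonnegativity facts
  have hVnn : ∀ x ∈ Set.Ico (0:ℝ) b, 0 ≤ V x := by
    intro x hx
    exact intervalIntegral.integral_nonneg hx.1
      (fun s hs => hnonneg s ⟨hs.1, lt_of_le_of_lt hs.2 hx.2⟩)
  have hLnn : ∀ x ∈ Set.Ico (0:ℝ) b, 0 ≤ L x := by
    intro x hx
    have : (0:ℝ) ≤ ∫ s in (0:ℝ)..x, Real.sqrt (u s) :=
      intervalIntegral.integral_nonneg hx.1 (fun s _ => Real.sqrt_nonneg _)
    simp only [hL]; linarith
  -- the Grönwall bound for h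
  have key : ∀ t ∈ Set.Ico (0:ℝ) b, h t ≤ B := by
    intro t ht
    have hICO : Set.Ico (0:ℝ) t ⊆ Set.Ico 0 b :=
      fun y hy => ⟨hy.1, lt_trans hy.2 ht.2⟩
    -- continuity of h on [0,t]
    have hcontV : ContinuousOn V (Set.Icc 0 t) := prim_continuousOn hcont ht
    have hcontL : ContinuousOn L (Set.Icc 0 t) :=
      continuousOn_const.add (prim_continuousOn hcont' ht)
    have hconth : ContinuousOn h (Set.Icc 0 t) := hcontV.add (hcontL.pow 2)
    -- derivative of h
    have hderiv : ∀ x ∈ Set.Ico (0:ℝ) t,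
        HasDerivWithinAt h (u x + 2 * L x * Real.sqrt (u x)) (Set.Ici x) x := by
      intro x hx
      have hxb := hICO hx
      have hdV : HasDerivWithinAt V (u x) (Set.Ici x) x := prim_hasDerivWithinAt hcont hxb
      have hdL : HasDerivWithinAt L (Real.sqrt (u x)) (Set.Ici x) x :=
        (prim_hasDerivWithinAt hcont' hxb).const_add ℓ₀
      have := hdV.add ((hdL.pow 2))
      refine this.congr_deriv ?_
      push_cast
      ring
    -- initial value
    have hinit : ‖h 0‖ ≤ ℓ₀ ^ 2 := by
      have : h 0 = ℓ₀ ^ 2 := by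
        simp [hh, hV, hL, intervalIntegral.integral_same]
      rw [this, Real.norm_eq_abs, abs_of_nonneg (sq_nonneg _)]
    -- bound on the derivative
    have hbound : ∀ x ∈ Set.Ico (0:ℝ) t,
        ‖u x + 2 * L x * Real.sqrt (u x)‖ ≤ K * ‖h x‖ + 4 * α := by
      intro x hx
      have hxb := hICO hx
      have hux : 0 ≤ u x := hnonneg x hxb
      have hsx : 0 ≤ Real.sqrt (u x) := Real.sqrt_nonneg _
      have hLx : 0 ≤ L x := hLnn x hxb
      have hVx : 0 ≤ V x := hVnn x hxb
      have hsq : Real.sqrt (u x) ^ 2 = u x := Real.sq_sqrt hux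
      have hamgm : 2 * L x * Real.sqrt (u x) ≤ L x ^ 2 + Real.sqrt (u x) ^ 2 :=
        two_mul_le_add_sq _ _
      have hIx := hineq x hxb
      have hnn : 0 ≤ u x + 2 * L x * Real.sqrt (u x) := by positivity
      have hhx : 0 ≤ h x := by simp only [hh]; positivity
      rw [Real.norm_eq_abs, Real.norm_eq_abs, abs_of_nonneg hnn, abs_of_nonneg hhx]
      simp only [hh, hK]
      simp only [hV, hL] at *
      nlinarith
    have := norm_le_gronwallBound_of_norm_deriv_right_le hconth hderiv hinit hbound
      t ⟨ht.1, le_refl t⟩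
    calc h t ≤ ‖h t‖ := le_abs_self _
      _ ≤ gronwallBound (ℓ₀ ^ 2) K (4 * α) (t - 0) := this
      _ ≤ B := by
          rw [sub_zero]
          exact gronwallBound_mono_x (sq_nonneg _) hKpos (by linarith) ht.2.le
  -- conclude
  refine ⟨2 * α + (2 * N + 2 * A) * B, fun t ht => ?_⟩
  have hIt := hineq t ht
  have hVt := hVnn t ht
  have hLt := hLnn t ht
  have hht := key t ht
  simp only [hh, hV, hL] at *
  nlinarith [sq_nonneg (ℓ₀ + ∫ s in (0:ℝ)..t, Real.sqrt (u s))]
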